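/- Scott's D_∞ K-model, whose elements are generated by the grammar α ::= * | a → α (with a a finite antichain, and a → α satisfying that * is the only element with empty antecedent, i.e. ∅ → * is identified with *), is hyperimmune: there is no sequence (α_n) in D_∞ and no function g : ℕ → ℕ (recursive or not) such that for all n, α_n = a_{n,1} → ⋯ → a_{n,g(n)} → α_n' and α_{n+1} ∈ ⋃_{k ≤ g(n)} a_{n,k}. -/

import Mathlib

/-- A finite antichain of a poset `D`. -/
def FinAntichain (D : Type*) [PartialOrder D] := {a : Finset D // IsAntichain (· ≤ ·) (a : Set D)}

/-- The order `a ≤ b` iff every element of `a` is below some element of `b`. -/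
instance {D : Type*} [PartialOrder D] : Preorder (FinAntichain D) where
  le a b := ∀ α ∈ a.1, ∃ β ∈ b.1, α ≤ β
  le_refl a := fun α h => ⟨α, h, le_refl α⟩
  le_trans a b c hab hbc := fun α hα => by
    obtain ⟨β, hβ, h1⟩ := hab α hα
    obtain ⟨γ, hγ, h2⟩ := hbc β hβ
    exact ⟨γ, hγ, h1.trans h2⟩

/-- An extensional (possibly partial) K-model structure on a poset `D`: a partial map `j`
defined on `dom ⊆ (A_f(D)ᵒᵖ × D)` which is an order isomorphism from `dom` onto `D`
(recall `(a, α) ≤ (b, β)` in `A_f(D)ᵒᵖ × D` iff `b ≤ a` and `α ≤ β`). -/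
structure PartialKModel (D : Type*) [PartialOrder D] where
  dom : Set (FinAntichain D × D)
  j : FinAntichain D × D → D
  injOn : Set.InjOn j dom
  surj : ∀ α : D, ∃ p ∈ dom, j p = α
  le_iff : ∀ p ∈ dom, ∀ q ∈ dom, (j p ≤ j q ↔ (q.1 ≤ p.1 ∧ p.2 ≤ q.2))

/-- `Unfolds M α l α'` : `α = a₁ → ⋯ → aₘ → α'` where `l = [a₁, …, aₘ]`, unfolding through the
(partial) isomorphism `j`. -/
inductive PartialKModel.Unfolds {D : Type*} [PartialOrder D] (M : PartialKModel D) :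
    D → List (FinAntichain D) → D → Prop
  | nil (α : D) : PartialKModel.Unfolds M α [] α
  | cons {a : FinAntichain D} {β α' : D} {l : List (FinAntichain D)} :
      (a, β) ∈ M.dom → PartialKModel.Unfolds M β l α' →
      PartialKModel.Unfolds M (M.j (a, β)) (a :: l) α'

/-- `BadWitness M α g` : for every `n`, `α n` unfolds as `a_{n,1} → ⋯ → a_{n,g n} → α'` and
`α (n+1)` belongs to one of the antichains `a_{n,k}`, `k ≤ g n`. -/
def PartialKModel.BadWitness {D : Type*} [PartialOrder D] (M : PartialKModel D)
    (α : ℕ → D) (g : ℕ → ℕ) : Prop :=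
  ∀ n : ℕ, ∃ (l : List (FinAntichain D)) (α' : D),
    l.length = g n ∧ M.Unfolds (α n) l α' ∧ ∃ a ∈ l, α (n + 1) ∈ a.1

/-- Hyperimmunity: no sequence `(α_n)` and recursive `g` satisfy the bad-witness condition. -/
def PartialKModel.Hyperimmune {D : Type*} [PartialOrder D] (M : PartialKModel D) : Prop :=
  ¬ ∃ (α : ℕ → D) (g : ℕ → ℕ), Computable g ∧ M.BadWitness α g

/-- The increasing approximations of a completion: `strata N B 0 = B` and
`strata N B (n+1)` adds all `j(a, β)` with `a` and `β` from `strata N B n`. -/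
def PartialKModel.strata {D : Type*} [PartialOrder D] (N : PartialKModel D) (B : Set D) :
    ℕ → Set D
  | 0 => B
  | n + 1 => N.strata B n ∪
      {x | ∃ (a : FinAntichain D) (β : D),
        ((a.1 : Finset D) : Set D) ⊆ N.strata B n ∧ β ∈ N.strata B n ∧ N.j (a, β) = x}

/-- `IsCompletion M N ι` : the total K-model `N` on `D̄`, together with the order-embedding
`ι : E → D̄`, is the completion of the partial K-model `M` on `E`: `N` is total, `ι` preserves
and reflects the order, `ι` transports `j_M` to `j_N` (the antichain being transported
pointwise), and every element of `D̄` appears in some stratum of the completion over the image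
of `E`. -/
def IsCompletion {E DD : Type*} [PartialOrder E] [PartialOrder DD]
    (M : PartialKModel E) (N : PartialKModel DD) (ι : E → DD) : Prop :=
  N.dom = Set.univ ∧
  (∀ x y : E, ι x ≤ ι y ↔ x ≤ y) ∧
  (∀ p ∈ M.dom, ∃ b : FinAntichain DD,
      ((b.1 : Finset DD) : Set DD) = ι '' ((p.1.1 : Finset E) : Set E) ∧
      N.j (b, ι p.2) = ι (M.j p)) ∧
  (∀ x : DD, ∃ n : ℕ, x ∈ N.strata (Set.range ι) n)

/-- Scott's `D_∞`, the completion of the one-point partial K-model `({*}, j)`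
with `j(∅, *) = *`, is hyperimmune in the strong sense: there is no sequence `(α_n)` in `D_∞`
and no function `g : ℕ → ℕ` whatsoever (recursive or not) witnessing the failure of
hyperimmunity. -/
theorem scott_Dinf_hyperimmune {DD : Type*} [PartialOrder DD]
    (M : PartialKModel PUnit) (hdom : M.dom = {p | p.1.1 = (∅ : Finset PUnit)})
    (N : PartialKModel DD) (ι : PUnit → DD) (h : IsCompletion M N ι) :
    ¬ ∃ (α : ℕ → DD) (g : ℕ → ℕ), N.BadWitness α g := by
  classical
  rintro ⟨α, g, hbad⟩
  obtain ⟨hNdom, hι, hj, hstrata⟩ := h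
  have hinj : Function.Injective N.j := by
    have h1 := N.injOn
    rw [hNdom] at h1
    exact Set.injOn_univ.mp h1
  obtain ⟨p, hp, hjp⟩ := M.surj PUnit.unit
  obtain ⟨b, hb, hjb⟩ := hj p hp
  have hbempty : b.1 = (∅ : Finset DD) := by
    have hp' : p.1.1 = (∅ : Finset PUnit) := by rw [hdom] at hp; exact hp
    rw [hp'] at hb
    have : ((b.1 : Finset DD) : Set DD) = ∅ := by simpa using hb
    exact_mod_cast Finset.coe_injective (by simpa using this)
  have hjb' : N.j (b, ι PUnit.unit) = ι PUnit.unit := hjb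
  have lemA : ∀ {x : DD} {l : List (FinAntichain DD)} {α' : DD}, N.Unfolds x l α' →
      x = ι PUnit.unit → ∀ a ∈ l, a.1 = (∅ : Finset DD) := by
    intro x l α' hu
    induction hu with
    | nil α0 => intro _ a ha; exact absurd ha List.not_mem_nil
    | @cons a0 β0 αp l0 hd hu' ih =>
      intro hx a' ha'
      have heq : (a0, β0) = (b, ι PUnit.unit) := hinj (hx.trans hjb'.symm)
      have ha0 : a0 = b := (Prod.mk.injEq _ _ _ _ ▸ heq).1
      have hβ0 : β0 = ι PUnit.unit := (Prod.mk.injEq _ _ _ _ ▸ heq).2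
      rcases List.mem_cons.mp ha' with h1 | h1
      · rw [h1, ha0, hbempty]
      · exact ih hβ0 a' h1
  have key : ∀ r (x : DD), x ∈ N.strata (Set.range ι) r →
      ∀ (l : List (FinAntichain DD)) (α' : DD), N.Unfolds x l α' →
      ∀ a ∈ l, ∀ γ ∈ a.1, ∃ r' < r, γ ∈ N.strata (Set.range ι) r' := by
    intro r
    induction r with
    | zero =>
      intro x hx l α' hu a ha γ hγ
      obtain ⟨u, hu'⟩ := hx
      have hxeq : x = ι PUnit.unit := hu'.symm
      have := lemA hu hxeq a ha
      rw [this] at hγ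
      exact absurd hγ (Finset.notMem_empty γ)
    | succ r ih =>
      intro x hx l α' hu a ha γ hγ
      rcases hx with hx | ⟨a₁, β₁, ha₁, hβ₁, hjx⟩
      · obtain ⟨r', hr', hm⟩ := ih x hx l α' hu a ha γ hγ
        exact ⟨r', hr'.trans (Nat.lt_succ_self r), hm⟩
      · cases hu with
        | nil => exact absurd ha List.not_mem_nil
        | @cons a0 β0 αp l0 hd hu' =>
          have heq : (a₁, β₁) = (a0, β0) := hinj hjx
          have ha0 : a₁ = a0 := (Prod.mk.injEq _ _ _ _ ▸ heq).1
          have hβ0 : β₁ = β0 := (Prod.mk.injEq _ _ _ _ ▸ heq).2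
          rcases List.mem_cons.mp ha with h1 | h1
          · refine ⟨r, Nat.lt_succ_self r, ha₁ ?_⟩
            rw [ha0]
            exact_mod_cast h1 ▸ hγ
          · obtain ⟨r', hr', hm⟩ := ih β0 (hβ0 ▸ hβ₁) l0 _ hu' a h1 γ hγ
            exact ⟨r', hr'.trans (Nat.lt_succ_self r), hm⟩
  let f : ℕ → ℕ := fun n => Nat.find (hstrata (α n))
  have hdec : ∀ n, f (n + 1) < f n := by
    intro n
    obtain ⟨l, α', -, hu, a, ha, hmem⟩ := hbad n
    obtain ⟨r', hr', hmem'⟩ := key (f n) (α n) (Nat.find_spec (hstrata (α n))) l α' hu a ha _ hmem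
    exact lt_of_le_of_lt (Nat.find_le hmem') hr'
  have hb2 : ∀ n, f n + n ≤ f 0 := by
    intro n
    induction n with
    | zero => simp
    | succ k ihk => have := hdec k; omega
  have := hb2 (f 0 + 1)
  omega
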